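/- Let G be a graph with h(G) = bw(G) that admits at least two distinct optimum bisections, i.e., there exist bisection vectors y and y' with cw(y) = cw(y') = bw(G) and y' ∉ {y, −y}. Then the maximizing vector is unique up to constant translation: if d₁ and d₂ both satisfy g(G,d₁) = g(G,d₂) = bw(G), then d₁ − d₂ = c·𝟙 for some c ∈ ℝ (where 𝟙 is the all-ones vector). Moreover, for every optimum bisection vector y there exists a unique α^{(y)} ∈ ℝ with g(G, d^{(y)} + α^{(y)}·y) = bw(G). -/

import Mathlib

open Matrix BigOperators Finset

noncomputable section

/-- Adjacency matrix of a graph on `Fin n`, with real entries. -/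
def adjA {n : ℕ} (G : SimpleGraph (Fin n)) [DecidableRel G.Adj] :
    Matrix (Fin n) (Fin n) ℝ :=
  Matrix.of fun i j => if G.Adj i j then (1 : ℝ) else 0

/-- A bisection vector: entries in `{+1, -1}` summing to zero. -/
def IsBisection {n : ℕ} (x : Fin n → ℝ) : Prop :=
  (∀ i, x i = 1 ∨ x i = -1) ∧ ∑ i, x i = 0

/-- Cut width of a `±1` vector: `∑_{{i,j}∈E} (1 - x_i x_j)/2`, written as a sum
over ordered pairs (each edge counted twice, hence the `/4`). -/
def cw {n : ℕ} (G : SimpleGraph (Fin n)) [DecidableRel G.Adj] (x : Fin n → ℝ) : ℝ :=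
  (∑ i, ∑ j, adjA G i j * (1 - x i * x j)) / 4

/-- Bisection width: minimum cut width over all bisection vectors. -/
def bw {n : ℕ} (G : SimpleGraph (Fin n)) [DecidableRel G.Adj] : ℝ :=
  sInf {c | ∃ x : Fin n → ℝ, IsBisection x ∧ cw G x = c}

/-- `λ_S(B)`: supremum of the Rayleigh quotient of `B` over nonzero vectors of
coordinate sum zero. -/
def lamS {n : ℕ} (B : Matrix (Fin n) (Fin n) ℝ) : ℝ :=
  sSup {r | ∃ x : Fin n → ℝ, x ≠ 0 ∧ ∑ i, x i = 0 ∧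
    r = (x ⬝ᵥ B.mulVec x) / (∑ i, (x i) ^ 2)}

/-- Sum of all entries of a matrix. -/
def msum {n : ℕ} (M : Matrix (Fin n) (Fin n) ℝ) : ℝ := ∑ i, ∑ j, M i j

/-- Boppana's function `g(G,d)`. -/
def gB {n : ℕ} (G : SimpleGraph (Fin n)) [DecidableRel G.Adj] (d : Fin n → ℝ) : ℝ :=
  (msum (adjA G + Matrix.diagonal d) - n * lamS (adjA G + Matrix.diagonal d)) / 4

/-- Boppana's lower bound `h(G) = sup_d g(G,d)`. -/
def hB {n : ℕ} (G : SimpleGraph (Fin n)) [DecidableRel G.Adj] : ℝ :=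
  sSup {r | ∃ d : Fin n → ℝ, r = gB G d}

/-- The vector `d^{(y)} = -diag(y)·A·y`, i.e. `d^{(y)}_i = -y_i ∑_j A_{ij} y_j`. -/
def dVec {n : ℕ} (G : SimpleGraph (Fin n)) [DecidableRel G.Adj]
    (y : Fin n → ℝ) : Fin n → ℝ :=
  fun i => -(y i) * ∑ j, adjA G i j * y j

section Basic
variable {n : ℕ} (G : SimpleGraph (Fin n)) [DecidableRel G.Adj]

lemma adjA_symm (i j : Fin n) : adjA G i j = adjA G j i := by
  simp only [adjA, Matrix.of_apply, SimpleGraph.adj_comm]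

lemma adjA_diag (i : Fin n) : adjA G i i = 0 := by
  simp [adjA]

lemma adjA_nonneg (i j : Fin n) : 0 ≤ adjA G i j := by
  unfold adjA; dsimp; split <;> norm_num

lemma adjA_le_one (i j : Fin n) : adjA G i j ≤ 1 := by
  unfold adjA; dsimp; split <;> norm_num

lemma B_transpose (d : Fin n → ℝ) :
    (adjA G + Matrix.diagonal d)ᵀ = adjA G + Matrix.diagonal d := by
  ext i j
  simp [Matrix.transpose_apply, Matrix.add_apply, adjA_symm G j i,
    Matrix.diagonal_apply]
  rcases eq_or_ne i j with h | h
  · subst h; ring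
  · simp [h, Ne.symm h]

lemma bis_sq {x : Fin n → ℝ} (hx : ∀ i, x i = 1 ∨ x i = -1) (i : Fin n) :
    x i * x i = 1 := by rcases hx i with h | h <;> rw [h] <;> norm_num

lemma bis_normsq {x : Fin n → ℝ} (hx : ∀ i, x i = 1 ∨ x i = -1) :
    ∑ i, (x i) ^ 2 = (n : ℝ) := by
  have : ∀ i ∈ Finset.univ, (x i) ^ 2 = 1 := by
    intro i _; rcases hx i with h | h <;> rw [h] <;> norm_num
  rw [Finset.sum_congr rfl this]; simp

lemma msum_add_diag (d : Fin n → ℝ) :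
    msum (adjA G + Matrix.diagonal d) = msum (adjA G) + ∑ i, d i := by
  unfold msum
  rw [← Finset.sum_add_distrib]
  congr 1; ext i
  rw [Finset.sum_congr rfl (fun j _ => (Matrix.add_apply _ _ i j)),
    Finset.sum_add_distrib]
  congr 1
  rw [Finset.sum_eq_single i]
  · simp [Matrix.diagonal_apply]
  · intro j _ hj; simp [Matrix.diagonal_apply, Ne.symm hj]
  · simp

lemma quad_diag {x : Fin n → ℝ} (hx : ∀ i, x i = 1 ∨ x i = -1) (d : Fin n → ℝ) :
    x ⬝ᵥ (adjA G + Matrix.diagonal d).mulVec x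
      = x ⬝ᵥ (adjA G).mulVec x + ∑ i, d i := by
  rw [Matrix.add_mulVec, dotProduct_add]
  congr 1
  unfold dotProduct
  rw [Finset.sum_congr rfl (fun i _ => by rw [Matrix.mulVec_diagonal])]
  congr 1; ext i
  rcases hx i with h | h <;> rw [h] <;> ring

lemma cw_eq (x : Fin n → ℝ) :
    cw G x = (msum (adjA G) - x ⬝ᵥ (adjA G).mulVec x) / 4 := by
  unfold cw msum dotProduct Matrix.mulVec
  congr 1
  rw [← Finset.sum_sub_distrib]
  congr 1; ext i
  show _ = _ - x i * ((fun j => adjA G i j) ⬝ᵥ x)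
  unfold dotProduct
  rw [Finset.mul_sum, ← Finset.sum_sub_distrib]
  congr 1; ext j
  ring

end Basic

section Rayleigh
variable {n : ℕ}

lemma sumsq_nonneg (x : Fin n → ℝ) : 0 ≤ ∑ i, (x i)^2 :=
  Finset.sum_nonneg fun i _ => sq_nonneg _

lemma sumsq_pos {x : Fin n → ℝ} (hx : x ≠ 0) : 0 < ∑ i, (x i)^2 := by
  obtain ⟨i, hi⟩ := Function.ne_iff.mp hx
  have h2 : 0 < (x i)^2 := by
    have : x i ≠ 0 := hi
    positivity
  exact Finset.sum_pos' (fun j _ => sq_nonneg _) ⟨i, Finset.mem_univ i, h2⟩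

lemma quad_expand (B : Matrix (Fin n) (Fin n) ℝ) (x : Fin n → ℝ) :
    x ⬝ᵥ B.mulVec x = ∑ i, ∑ j, x i * (B i j * x j) := by
  simp [dotProduct, Matrix.mulVec, Finset.mul_sum]

lemma abs_quad_le (B : Matrix (Fin n) (Fin n) ℝ) (x : Fin n → ℝ) :
    |x ⬝ᵥ B.mulVec x| ≤ (∑ i, ∑ j, |B i j|) * ∑ i, (x i)^2 := by
  have hterm : ∀ i j : Fin n, |x i * (B i j * x j)| ≤ |B i j| * ∑ k, (x k)^2 := by
    intro i j
    have hi : (x i)^2 ≤ ∑ k, (x k)^2 :=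
      Finset.single_le_sum (fun k _ => sq_nonneg (x k)) (Finset.mem_univ i)
    have hj : (x j)^2 ≤ ∑ k, (x k)^2 :=
      Finset.single_le_sum (fun k _ => sq_nonneg (x k)) (Finset.mem_univ j)
    have h1 : |x i * (B i j * x j)| = |B i j| * (|x i| * |x j|) := by
      rw [abs_mul, abs_mul]; ring
    rw [h1]
    apply mul_le_mul_of_nonneg_left _ (abs_nonneg _)
    nlinarith [sq_nonneg (|x i| - |x j|), sq_abs (x i), sq_abs (x j),
      abs_nonneg (x i), abs_nonneg (x j)]
  rw [quad_expand]
  calc |∑ i, ∑ j, x i * (B i j * x j)| ≤ ∑ i, |∑ j, x i * (B i j * x j)| :=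
        Finset.abs_sum_le_sum_abs _ _
    _ ≤ ∑ i, ∑ j, |x i * (B i j * x j)| :=
        Finset.sum_le_sum fun i _ => Finset.abs_sum_le_sum_abs _ _
    _ ≤ ∑ i, ∑ j, |B i j| * ∑ k, (x k)^2 :=
        Finset.sum_le_sum fun i _ => Finset.sum_le_sum fun j _ => hterm i j
    _ = (∑ i, ∑ j, |B i j|) * ∑ i, (x i)^2 := by
        simp_rw [← Finset.sum_mul]

lemma bddAbove_rset (B : Matrix (Fin n) (Fin n) ℝ) :
    BddAbove {r | ∃ x : Fin n → ℝ, x ≠ 0 ∧ ∑ i, x i = 0 ∧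
      r = (x ⬝ᵥ B.mulVec x) / (∑ i, (x i) ^ 2)} := by
  refine ⟨∑ i, ∑ j, |B i j|, ?_⟩
  rintro r ⟨x, hx0, _, rfl⟩
  have hS := sumsq_pos hx0
  rw [div_le_iff₀ hS]
  exact le_trans (le_abs_self _) (abs_quad_le B x)

lemma quad_le_lamS (B : Matrix (Fin n) (Fin n) ℝ) {x : Fin n → ℝ}
    (hxs : ∑ i, x i = 0) :
    x ⬝ᵥ B.mulVec x ≤ lamS B * ∑ i, (x i)^2 := by
  rcases eq_or_ne x 0 with rfl | hx0
  · simp [dotProduct]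
  · have hS := sumsq_pos hx0
    have hmem : (x ⬝ᵥ B.mulVec x) / (∑ i, (x i)^2) ∈ {r | ∃ x : Fin n → ℝ,
        x ≠ 0 ∧ ∑ i, x i = 0 ∧ r = (x ⬝ᵥ B.mulVec x) / (∑ i, (x i) ^ 2)} :=
      ⟨x, hx0, hxs, rfl⟩
    have h := le_csSup (bddAbove_rset B) hmem
    have := (div_le_iff₀ hS).mp h
    exact this

lemma rset_nonempty (hn2 : 2 ≤ n) (B : Matrix (Fin n) (Fin n) ℝ) :
    Set.Nonempty {r | ∃ x : Fin n → ℝ, x ≠ 0 ∧ ∑ i, x i = 0 ∧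
      r = (x ⬝ᵥ B.mulVec x) / (∑ i, (x i) ^ 2)} := by
  have h0 : (0 : ℕ) < n := by omega
  have h1 : (1 : ℕ) < n := by omega
  set i0 : Fin n := ⟨0, h0⟩
  set i1 : Fin n := ⟨1, h1⟩
  have hne : i0 ≠ i1 := by simp [i0, i1, Fin.ext_iff]
  set x : Fin n → ℝ := Pi.single i0 1 + Pi.single i1 (-1) with hxdef
  refine ⟨_, x, ?_, ?_, rfl⟩
  · intro h
    have := congrFun h i0
    simp [hxdef, Pi.single_apply, hne] at this
  · simp [hxdef, Finset.sum_add_distrib, Finset.sum_pi_single']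

lemma lamS_le (hn2 : 2 ≤ n) (B : Matrix (Fin n) (Fin n) ℝ) {K : ℝ}
    (h : ∀ x : Fin n → ℝ, x ≠ 0 → ∑ i, x i = 0 →
      x ⬝ᵥ B.mulVec x ≤ K * ∑ i, (x i)^2) :
    lamS B ≤ K := by
  apply csSup_le (rset_nonempty hn2 B)
  rintro r ⟨x, hx0, hxs, rfl⟩
  rw [div_le_iff₀ (sumsq_pos hx0)]
  linarith [h x hx0 hxs]

lemma quad_add_const_diag (B : Matrix (Fin n) (Fin n) ℝ) (c : ℝ) (x : Fin n → ℝ) :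
    x ⬝ᵥ (B + Matrix.diagonal (fun _ => c)).mulVec x
      = x ⬝ᵥ B.mulVec x + c * ∑ i, (x i)^2 := by
  rw [Matrix.add_mulVec, dotProduct_add]
  congr 1
  unfold dotProduct
  rw [Finset.mul_sum]
  apply Finset.sum_congr rfl
  intro i _
  rw [Matrix.mulVec_diagonal]
  ring

lemma lamS_shift (hn2 : 2 ≤ n) (B : Matrix (Fin n) (Fin n) ℝ) (c : ℝ) :
    lamS (B + Matrix.diagonal (fun _ => c)) = lamS B + c := by
  apply le_antisymm
  · apply lamS_le hn2
    intro x hx0 hxs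
    rw [quad_add_const_diag]
    have := quad_le_lamS B hxs
    nlinarith [this]
  · have h : lamS B ≤ lamS (B + Matrix.diagonal (fun _ => c)) - c := by
      apply lamS_le hn2
      intro x hx0 hxs
      have h2 := quad_le_lamS (B + Matrix.diagonal (fun _ => c)) hxs
      rw [quad_add_const_diag] at h2
      nlinarith [h2]
    linarith

end Rayleigh

section EqCase
variable {n : ℕ}

lemma quad_coeff_zero {a b : ℝ} (ha : 0 ≤ a)
    (h : ∀ t : ℝ, 0 ≤ b * t + a * t^2) : b = 0 := by
  rcases eq_or_lt_of_le ha with ha0 | ha0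
  · have h1 := h (-b)
    rw [← ha0] at h1
    nlinarith [sq_nonneg b]
  · have h2 := h (-(b/(2*a)))
    have e : b * (-(b/(2*a))) + a * (-(b/(2*a)))^2 = -(b^2/(4*a)) := by
      field_simp
      ring
    rw [e] at h2
    have hb2 : b^2 ≤ 0 := by
      by_contra hb
      push_neg at hb
      have : 0 < b^2/(4*a) := by positivity
      linarith
    have hbb : b^2 = 0 := le_antisymm hb2 (sq_nonneg b)
    exact pow_eq_zero_iff two_ne_zero |>.mp hbb

lemma orth_const (hn : 0 < n) (u : Fin n → ℝ)
    (h : ∀ w : Fin n → ℝ, ∑ i, w i = 0 → w ⬝ᵥ u = 0) :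
    ∃ c : ℝ, ∀ i, u i = c := by
  have hn' : (n : ℝ) ≠ 0 := Nat.cast_ne_zero.mpr hn.ne'
  set c := (∑ i, u i) / n with hc
  refine ⟨c, ?_⟩
  set w : Fin n → ℝ := fun i => u i - c with hw
  have hws : ∑ i, w i = 0 := by
    simp only [hw, Finset.sum_sub_distrib, Finset.sum_const, Finset.card_univ,
      Fintype.card_fin, nsmul_eq_mul, hc]
    field_simp
    ring
  have h0 := h w hws
  have h1 : w ⬝ᵥ u = ∑ i, (w i)^2 + c * ∑ i, w i := by
    unfold dotProduct
    rw [Finset.mul_sum, ← Finset.sum_add_distrib]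
    apply Finset.sum_congr rfl
    intro i _
    simp only [hw]
    ring
  rw [hws, h0] at h1
  have h2 : ∑ i, (w i)^2 = 0 := by linarith
  intro i
  have h3 : (w i)^2 = 0 :=
    (Finset.sum_eq_zero_iff_of_nonneg (fun j _ => sq_nonneg (w j))).mp h2 i
      (Finset.mem_univ i)
  have : w i = 0 := pow_eq_zero_iff two_ne_zero |>.mp h3
  have := sub_eq_zero.mp this
  exact this

lemma dot_mulVec_symm {B : Matrix (Fin n) (Fin n) ℝ} (hB : Bᵀ = B)
    (v w : Fin n → ℝ) : v ⬝ᵥ B.mulVec w = w ⬝ᵥ B.mulVec v := by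
  rw [Matrix.dotProduct_mulVec, ← Matrix.mulVec_transpose, hB,
    dotProduct_comm]

variable (G : SimpleGraph (Fin n)) [DecidableRel G.Adj]

/-- Core equality-case lemma: if `g(G,d) = cw(z)` for a bisection `z`, then
`B z = λ z - c·𝟙` for some constant `c`. -/
lemma eigen_core (hn2 : 2 ≤ n) (z d : Fin n → ℝ) (hz : IsBisection z)
    (heq : gB G d = cw G z) :
    ∃ c : ℝ, ∀ i, (adjA G + Matrix.diagonal d).mulVec z i
      = lamS (adjA G + Matrix.diagonal d) * z i - c := by
  have hn : 0 < n := by omega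
  set B := adjA G + Matrix.diagonal d with hB
  set L := lamS B with hL
  have hsym : Bᵀ = B := B_transpose G d
  have hnsq : ∑ i, (z i)^2 = (n : ℝ) := bis_normsq hz.1
  -- quad z = n L
  have hquad : z ⬝ᵥ B.mulVec z = n * L := by
    have h1 : gB G d = (msum (adjA G) + ∑ i, d i - n * L) / 4 := by
      rw [gB, msum_add_diag]
    have h2 : cw G z = (msum (adjA G) - z ⬝ᵥ (adjA G).mulVec z) / 4 := cw_eq G z
    have h3 : z ⬝ᵥ B.mulVec z = z ⬝ᵥ (adjA G).mulVec z + ∑ i, d i :=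
      quad_diag G hz.1 d
    rw [h1, h2] at heq
    have h4 : msum (adjA G) + ∑ i, d i - n * L
        = msum (adjA G) - z ⬝ᵥ (adjA G).mulVec z := by linarith
    linarith
  -- orthogonality
  have key : ∀ w : Fin n → ℝ, ∑ i, w i = 0 →
      w ⬝ᵥ (fun i => L * z i - B.mulVec z i) = 0 := by
    intro w hw
    have expand : ∀ t : ℝ, (z + t • w) ⬝ᵥ B.mulVec (z + t • w)
        = z ⬝ᵥ B.mulVec z + 2*t*(w ⬝ᵥ B.mulVec z) + t^2 * (w ⬝ᵥ B.mulVec w) := by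
      intro t
      simp only [Matrix.mulVec_add, Matrix.mulVec_smul, dotProduct_add,
        add_dotProduct, dotProduct_smul, smul_dotProduct, smul_eq_mul]
      rw [dot_mulVec_symm hsym z w]
      ring
    have sumsq_expand : ∀ t : ℝ, ∑ i, ((z + t • w) i)^2
        = (n : ℝ) + 2*t*(w ⬝ᵥ z) + t^2 * ∑ i, (w i)^2 := by
      intro t
      have : ∀ i : Fin n, ((z + t • w) i)^2
          = (z i)^2 + 2*t*(w i * z i) + t^2 * (w i)^2 := by
        intro i
        simp only [Pi.add_apply, Pi.smul_apply, smul_eq_mul]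
        ring
      rw [Finset.sum_congr rfl (fun i _ => this i)]
      rw [Finset.sum_add_distrib, Finset.sum_add_distrib, hnsq, ← Finset.mul_sum,
        ← Finset.mul_sum]
      rfl
    have hpos : ∀ t : ℝ, 0 ≤ (2*(L * (w ⬝ᵥ z) - w ⬝ᵥ B.mulVec z)) * t
        + (L * ∑ i, (w i)^2 - w ⬝ᵥ B.mulVec w) * t^2 := by
      intro t
      have hsum0 : ∑ i, (z + t • w) i = 0 := by
        simp only [Pi.add_apply, Pi.smul_apply, smul_eq_mul,
          Finset.sum_add_distrib, hz.2, hw, ← Finset.mul_sum]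
        ring
      have hle := quad_le_lamS B hsum0
      rw [expand t, sumsq_expand t] at hle
      nlinarith [hle, hquad]
    have ha : 0 ≤ L * ∑ i, (w i)^2 - w ⬝ᵥ B.mulVec w := by
      have := quad_le_lamS B hw
      linarith
    have hb := quad_coeff_zero ha hpos
    have : L * (w ⬝ᵥ z) - w ⬝ᵥ B.mulVec z = 0 := by linarith
    have hdot : w ⬝ᵥ (fun i => L * z i - B.mulVec z i)
        = L * (w ⬝ᵥ z) - w ⬝ᵥ B.mulVec z := by
      unfold dotProduct
      rw [Finset.mul_sum, ← Finset.sum_sub_distrib]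
      apply Finset.sum_congr rfl
      intro i _
      ring
    rw [hdot, this]
  obtain ⟨c, hc⟩ := orth_const hn _ key
  exact ⟨c, fun i => by linarith [hc i]⟩

end EqCase

section Misc
variable {n : ℕ} (G : SimpleGraph (Fin n)) [DecidableRel G.Adj]

lemma msum_add_diag' (M : Matrix (Fin n) (Fin n) ℝ) (e : Fin n → ℝ) :
    msum (M + Matrix.diagonal e) = msum M + ∑ i, e i := by
  unfold msum
  rw [← Finset.sum_add_distrib]
  congr 1; ext i
  rw [Finset.sum_congr rfl (fun j _ => (Matrix.add_apply _ _ i j)),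
    Finset.sum_add_distrib]
  congr 1
  rw [Finset.sum_eq_single i]
  · simp [Matrix.diagonal_apply]
  · intro j _ hj; simp [Matrix.diagonal_apply, Ne.symm hj]
  · simp

lemma gB_le_cw (hn2 : 2 ≤ n) (d x : Fin n → ℝ) (hx : IsBisection x) :
    gB G d ≤ cw G x := by
  set B := adjA G + Matrix.diagonal d with hB
  have h1 : x ⬝ᵥ B.mulVec x ≤ lamS B * n := by
    have := quad_le_lamS B hx.2
    rwa [bis_normsq hx.1] at this
  have h3 : x ⬝ᵥ B.mulVec x = x ⬝ᵥ (adjA G).mulVec x + ∑ i, d i :=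
    quad_diag G hx.1 d
  rw [gB, msum_add_diag, cw_eq]
  have h4 : x ⬝ᵥ (adjA G).mulVec x + ∑ i, d i ≤ (n : ℝ) * lamS B := by
    rw [← h3]; linarith
  linarith

lemma gB_shift (hn2 : 2 ≤ n) (d : Fin n → ℝ) (c : ℝ) :
    gB G (fun i => d i + c) = gB G d := by
  have hM : adjA G + Matrix.diagonal (fun i => d i + c)
      = (adjA G + Matrix.diagonal d) + Matrix.diagonal (fun _ => c) := by
    rw [add_assoc]
    congr 1
    rw [Matrix.diagonal_add]
  rw [gB, gB, hM, lamS_shift hn2, msum_add_diag', msum_add_diag]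
  have : ∑ _i : Fin n, c = (n : ℝ) * c := by
    simp [Finset.sum_const, Finset.card_univ, mul_comm]
  rw [this]
  ring

lemma not_two_bisections_n2 (hn : n = 2) (y y' : Fin n → ℝ)
    (hy : IsBisection y) (hy' : IsBisection y')
    (h1 : y' ≠ y) (h2 : y' ≠ -y) : False := by
  subst hn
  have hs := hy.2
  have hs' := hy'.2
  rw [Fin.sum_univ_two] at hs hs'
  have key : y' 0 = y 0 ∨ y' 0 = - y 0 := by
    rcases hy.1 0 with h | h <;> rcases hy'.1 0 with h' | h' <;> rw [h, h'] <;>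
      norm_num
  rcases key with hk | hk
  · refine h1 (funext fun i => ?_)
    fin_cases i
    · exact hk
    · show y' 1 = y 1
      linarith
  · refine h2 (funext fun i => ?_)
    fin_cases i
    · exact hk
    · show y' 1 = -y 1
      linarith

end Misc

section Pair
variable {n : ℕ}

lemma quad_pair (B : Matrix (Fin n) (Fin n) ℝ) (i j : Fin n) :
    (Pi.single i 1 - Pi.single j 1 : Fin n → ℝ) ⬝ᵥ
      B.mulVec (Pi.single i 1 - Pi.single j 1)
      = B i i + B j j - B i j - B j i := by
  rw [Matrix.mulVec_sub, dotProduct_sub, sub_dotProduct, sub_dotProduct]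
  simp only [Matrix.mulVec_single_one, single_dotProduct, Matrix.col_apply]
  ring_nf

lemma pair_sum (hij : i ≠ j) :
    ∑ k, (Pi.single i 1 - Pi.single j 1 : Fin n → ℝ) k = 0 := by
  simp [Finset.sum_sub_distrib, Finset.sum_pi_single']

lemma pair_sumsq {i j : Fin n} (hij : i ≠ j) :
    ∑ k, ((Pi.single i 1 - Pi.single j 1 : Fin n → ℝ) k)^2 = 2 := by
  have hsq : ∀ k, ((Pi.single i 1 - Pi.single j 1 : Fin n → ℝ) k)^2
      = (if k = i then (1:ℝ) else 0) + (if k = j then (1:ℝ) else 0) := by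
    intro k
    simp only [Pi.sub_apply, Pi.single_apply]
    by_cases hki : k = i <;> by_cases hkj : k = j
    · exact absurd (hki.symm.trans hkj) hij
    · simp [hki, hkj, hij, Ne.symm hij]
    · simp [hki, hkj, hij, Ne.symm hij]
    · simp [hki, hkj]
  rw [Finset.sum_congr rfl (fun k _ => hsq k), Finset.sum_add_distrib]
  simp only [Finset.sum_ite_eq', Finset.mem_univ, if_true]
  norm_num

lemma pair_ne_zero {i j : Fin n} (hij : i ≠ j) :
    (Pi.single i 1 - Pi.single j 1 : Fin n → ℝ) ≠ 0 := by
  intro h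
  have := congrFun h i
  simp [Pi.single_apply, hij] at this

end Pair

section Cont
variable {n : ℕ} (G : SimpleGraph (Fin n)) [DecidableRel G.Adj]

lemma quad_add (M N : Matrix (Fin n) (Fin n) ℝ) (x : Fin n → ℝ) :
    x ⬝ᵥ (M + N).mulVec x = x ⬝ᵥ M.mulVec x + x ⬝ᵥ N.mulVec x := by
  rw [Matrix.add_mulVec, dotProduct_add]

lemma abs_diag_sum (e : Fin n → ℝ) :
    ∑ i, ∑ j, |Matrix.diagonal e i j| = ∑ i, |e i| := by
  apply Finset.sum_congr rfl
  intro i _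
  rw [Finset.sum_eq_single i]
  · simp [Matrix.diagonal_apply]
  · intro j _ hj; simp [Matrix.diagonal_apply, Ne.symm hj]
  · simp

lemma lamS_diff (hn2 : 2 ≤ n) (e₁ e₂ : Fin n → ℝ) :
    lamS (adjA G + Matrix.diagonal e₁)
      ≤ lamS (adjA G + Matrix.diagonal e₂) + ∑ i, |e₁ i - e₂ i| := by
  apply lamS_le hn2
  intro x hx0 hxs
  have hM : adjA G + Matrix.diagonal e₁
      = (adjA G + Matrix.diagonal e₂)
        + Matrix.diagonal (fun i => e₁ i - e₂ i) := by
    rw [add_assoc, Matrix.diagonal_add]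
    congr 2
    funext i
    ring
  rw [hM, quad_add]
  have h1 := quad_le_lamS (adjA G + Matrix.diagonal e₂) hxs
  have h2 : x ⬝ᵥ (Matrix.diagonal fun i => e₁ i - e₂ i).mulVec x
      ≤ (∑ i, |e₁ i - e₂ i|) * ∑ i, (x i)^2 := by
    calc x ⬝ᵥ (Matrix.diagonal fun i => e₁ i - e₂ i).mulVec x
        ≤ |x ⬝ᵥ (Matrix.diagonal fun i => e₁ i - e₂ i).mulVec x| := le_abs_self _
      _ ≤ (∑ i, ∑ j, |Matrix.diagonal (fun i => e₁ i - e₂ i) i j|) * ∑ i, (x i)^2 :=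
          abs_quad_le _ _
      _ = (∑ i, |e₁ i - e₂ i|) * ∑ i, (x i)^2 := by rw [abs_diag_sum]
  have h3 : (lamS (adjA G + Matrix.diagonal e₂) + ∑ i, |e₁ i - e₂ i|) * ∑ i, (x i)^2
      = lamS (adjA G + Matrix.diagonal e₂) * ∑ i, (x i)^2
        + (∑ i, |e₁ i - e₂ i|) * ∑ i, (x i)^2 := by ring
  linarith

lemma gB_cont (hn2 : 2 ≤ n) : Continuous (gB G) := by
  have hlam : Continuous fun d : Fin n → ℝ => lamS (adjA G + Matrix.diagonal d) := by
    apply LipschitzWith.continuous (K := n)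
    apply LipschitzWith.of_dist_le_mul
    intro d₁ d₂
    have hb : ∑ i, |d₁ i - d₂ i| ≤ n * dist d₁ d₂ := by
      calc ∑ i, |d₁ i - d₂ i| = ∑ i, dist (d₁ i) (d₂ i) := by
            simp [Real.dist_eq]
        _ ≤ ∑ _i : Fin n, dist d₁ d₂ :=
            Finset.sum_le_sum fun i _ => dist_le_pi_dist d₁ d₂ i
        _ = n * dist d₁ d₂ := by
            simp [Finset.sum_const, Finset.card_univ, nsmul_eq_mul]
    have hc : ((n : NNReal) : ℝ) = (n : ℝ) := by simp
    rw [Real.dist_eq, abs_sub_le_iff, hc]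
    have k1 := lamS_diff G hn2 d₁ d₂
    have k2 := lamS_diff G hn2 d₂ d₁
    have he : ∑ i, |d₂ i - d₁ i| = ∑ i, |d₁ i - d₂ i| := by
      apply Finset.sum_congr rfl
      intro i _
      exact abs_sub_comm _ _
    constructor
    · linarith
    · rw [he] at k2; linarith
  have hmsum : Continuous fun d : Fin n → ℝ => msum (adjA G + Matrix.diagonal d) := by
    have he : (fun d : Fin n → ℝ => msum (adjA G + Matrix.diagonal d))
        = fun d => msum (adjA G) + ∑ i, d i := funext fun d => msum_add_diag G d
    rw [he]
    exact continuous_const.add (continuous_finset_sum _ fun i _ => continuous_apply i)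
  unfold gB
  exact (hmsum.sub (continuous_const.mul hlam)).div_const 4

end Cont

section Attain
variable {n : ℕ} (G : SimpleGraph (Fin n)) [DecidableRel G.Adj]

lemma coord_bound (hn3 : 3 ≤ n) :
    ∃ C : ℝ, 0 < C ∧ ∀ d : Fin n → ℝ, ∑ i, d i = 0 → bw G - 1 < gB G d →
      ∀ i, |d i| ≤ C := by
  have hn2 : 2 ≤ n := by omega
  have hnR : (3:ℝ) ≤ (n:ℝ) := by exact_mod_cast hn3
  set Λ : ℝ := (msum (adjA G) - 4 * bw G + 4) / n with hΛ
  set U : ℝ := ((n:ℝ) - 1) * (2 * Λ + 2) / ((n:ℝ) - 2) with hU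
  refine ⟨n * |U| + 1, by positivity, ?_⟩
  intro d hd0 hgb
  set B := adjA G + Matrix.diagonal d with hB
  have hlam : lamS B ≤ Λ := by
    have h1 : gB G d = (msum (adjA G) + ∑ i, d i - n * lamS B) / 4 := by
      rw [gB, msum_add_diag]
    rw [h1, hd0] at hgb
    rw [hΛ, le_div_iff₀ (by linarith : (0:ℝ) < (n:ℝ))]
    nlinarith
  have hup : ∀ i, d i ≤ U := by
    intro i
    have hpair : ∀ j : Fin n, j ≠ i → d i + d j ≤ 2 * lamS B + 2 := by
      intro j hj
      have hij : i ≠ j := Ne.symm hj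
      have hq := quad_le_lamS B (pair_sum hij)
      rw [quad_pair, pair_sumsq hij] at hq
      have hBii : B i i = d i := by
        simp [hB, Matrix.add_apply, adjA_diag, Matrix.diagonal_apply]
      have hBjj : B j j = d j := by
        simp [hB, Matrix.add_apply, adjA_diag, Matrix.diagonal_apply]
      have hBij : B i j = adjA G i j := by
        simp [hB, Matrix.add_apply, Matrix.diagonal_apply, hij]
      have hBji : B j i = adjA G j i := by
        simp [hB, Matrix.add_apply, Matrix.diagonal_apply, Ne.symm hij]
      rw [hBii, hBjj, hBij, hBji] at hq
      have h01 := adjA_le_one G i j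
      have h01' := adjA_le_one G j i
      have h00 := adjA_nonneg G i j
      have h00' := adjA_nonneg G j i
      linarith
    have hcard' : ((Finset.univ.erase i).card : ℝ) = (n:ℝ) - 1 := by
      rw [Finset.card_erase_of_mem (Finset.mem_univ i), Finset.card_univ,
        Fintype.card_fin, Nat.cast_sub (by omega)]
      simp
    have hsum : ∑ j ∈ Finset.univ.erase i, (d i + d j)
        ≤ ((n:ℝ) - 1) * (2 * lamS B + 2) := by
      calc ∑ j ∈ Finset.univ.erase i, (d i + d j)
          ≤ ∑ _j ∈ Finset.univ.erase i, (2 * lamS B + 2) :=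
            Finset.sum_le_sum fun j hj => hpair j (Finset.ne_of_mem_erase hj)
        _ = ((n:ℝ) - 1) * (2 * lamS B + 2) := by
            rw [Finset.sum_const, nsmul_eq_mul, hcard']
    have hexp : ∑ j ∈ Finset.univ.erase i, (d i + d j) = ((n:ℝ) - 2) * d i := by
      rw [Finset.sum_add_distrib, Finset.sum_const, nsmul_eq_mul, hcard',
        Finset.sum_erase_eq_sub (Finset.mem_univ i), hd0]
      ring
    rw [hexp] at hsum
    rw [hU, le_div_iff₀ (by linarith : (0:ℝ) < (n:ℝ) - 2)]
    nlinarith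
  have hlow : ∀ i, -(((n:ℝ) - 1) * U) ≤ d i := by
    intro i
    have hcard' : ((Finset.univ.erase i).card : ℝ) = (n:ℝ) - 1 := by
      rw [Finset.card_erase_of_mem (Finset.mem_univ i), Finset.card_univ,
        Fintype.card_fin, Nat.cast_sub (by omega)]
      simp
    have h1 : ∑ j ∈ Finset.univ.erase i, d j = - d i := by
      rw [Finset.sum_erase_eq_sub (Finset.mem_univ i), hd0]
      ring
    have h2 : ∑ j ∈ Finset.univ.erase i, d j ≤ ((n:ℝ) - 1) * U := by
      calc ∑ j ∈ Finset.univ.erase i, d j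
          ≤ ∑ _j ∈ Finset.univ.erase i, U :=
            Finset.sum_le_sum fun j _ => hup j
        _ = ((n:ℝ) - 1) * U := by rw [Finset.sum_const, nsmul_eq_mul, hcard']
    rw [h1] at h2
    linarith
  intro i
  rw [abs_le]
  have hUabs := le_abs_self U
  have hUabs' := abs_nonneg U
  constructor
  · have := hlow i
    nlinarith
  · have := hup i
    nlinarith

lemma exists_opt (hn3 : 3 ≤ n) (hh : hB G = bw G)
    (y : Fin n → ℝ) (hy : IsBisection y) (hopt : cw G y = bw G) :
    ∃ d : Fin n → ℝ, gB G d = bw G := by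
  have hn2 : 2 ≤ n := by omega
  have hnne : (n:ℝ) ≠ 0 := by positivity
  obtain ⟨C, hC0, hC⟩ := coord_bound G hn3
  set K : Set (Fin n → ℝ) := Set.Icc (fun _ => -C) (fun _ => C) with hK
  have hKc : IsCompact K := isCompact_Icc
  have hKne : K.Nonempty := by
    refine ⟨0, Set.mem_Icc.mpr ⟨fun i => ?_, fun i => ?_⟩⟩ <;> simp <;> linarith
  obtain ⟨dstar, hdK, hmax⟩ := hKc.exists_isMaxOn hKne ((gB_cont G hn2).continuousOn)
  refine ⟨dstar, le_antisymm ?_ ?_⟩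
  · rw [← hopt]; exact gB_le_cw G hn2 dstar y hy
  · by_contra hlt
    push_neg at hlt
    set ε := min (bw G - gB G dstar) 1 with hε
    have hε0 : 0 < ε := lt_min (by linarith) one_pos
    have hεle : ε ≤ bw G - gB G dstar := min_le_left _ _
    have hε1 : ε ≤ 1 := min_le_right _ _
    have hne : {r | ∃ d : Fin n → ℝ, r = gB G d}.Nonempty := ⟨gB G 0, 0, rfl⟩
    have hlt2 : bw G - ε < sSup {r | ∃ d : Fin n → ℝ, r = gB G d} := by
      have : bw G - ε < hB G := by rw [hh]; linarith
      exact this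
    obtain ⟨r, hrmem, hr⟩ := exists_lt_of_lt_csSup hne hlt2
    obtain ⟨d₀, rfl⟩ := hrmem
    set c := (∑ j, d₀ j) / n with hc
    set d₁ : Fin n → ℝ := fun i => d₀ i - c with hd₁
    have hshift : gB G d₀ = gB G d₁ := by
      have heq : (fun i => d₁ i + c) = d₀ := by funext i; simp [hd₁]
      calc gB G d₀ = gB G (fun i => d₁ i + c) := by rw [heq]
        _ = gB G d₁ := gB_shift G hn2 d₁ c
    have hsum : ∑ i, d₁ i = 0 := by
      simp only [hd₁, Finset.sum_sub_distrib, Finset.sum_const, Finset.card_univ,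
        Fintype.card_fin, nsmul_eq_mul, hc]
      field_simp
      ring
    have hgd₁ : bw G - 1 < gB G d₁ := by rw [← hshift]; linarith
    have hmem : d₁ ∈ K := by
      rw [hK, Set.mem_Icc]
      refine ⟨fun i => ?_, fun i => ?_⟩
      · exact (abs_le.mp (hC d₁ hsum hgd₁ i)).1
      · exact (abs_le.mp (hC d₁ hsum hgd₁ i)).2
    have hcon := hmax hmem
    have hfin : gB G dstar < gB G d₀ := by linarith
    rw [hshift] at hfin
    exact absurd hcon (by simpa using hfin.not_ge)

end Attain

/-- if `h(G) = bw(G)` and there are at least two distinct optimum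
bisections, then the maximizing vector `d^opt` is unique up to constant
translation, and for every optimum bisection vector `y` there is a unique
`α^{(y)}` with `g(G, d^{(y)} + α^{(y)}·y) = bw(G)`. -/
theorem dopt_unique_of_two_bisections {n : ℕ} (hn2 : 2 ≤ n) (hne : Even n)
    (G : SimpleGraph (Fin n)) [DecidableRel G.Adj]
    (hh : hB G = bw G)
    (y y' : Fin n → ℝ) (hy : IsBisection y) (hy' : IsBisection y')
    (hopt : cw G y = bw G) (hopt' : cw G y' = bw G)
    (hne1 : y' ≠ y) (hne2 : y' ≠ -y) :
    (∀ d₁ d₂ : Fin n → ℝ, gB G d₁ = bw G → gB G d₂ = bw G →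
        ∃ c : ℝ, d₁ - d₂ = fun _ => c) ∧
    (∀ z : Fin n → ℝ, IsBisection z → cw G z = bw G →
        ∃! α : ℝ, gB G (fun i => dVec G z i + α * z i) = bw G) := by
  have hn3 : 3 ≤ n := by
    by_contra h
    push_neg at h
    have hn2' : n = 2 := by omega
    exact not_two_bisections_n2 hn2' y y' hy hy' hne1 hne2
  set i0 : Fin n := ⟨0, by omega⟩ with hi0
  have struct : ∀ d : Fin n → ℝ, gB G d = bw G →
      ∀ z : Fin n → ℝ, IsBisection z → cw G z = bw G →
      ∃ c : ℝ, ∀ i, (adjA G + Matrix.diagonal d).mulVec z i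
        = lamS (adjA G + Matrix.diagonal d) * z i - c := by
    intro d hd z hz hcw
    exact eigen_core G hn2 z d hz (by rw [hd, hcw])
  have part1 : ∀ d₁ d₂ : Fin n → ℝ, gB G d₁ = bw G → gB G d₂ = bw G →
      ∃ c : ℝ, d₁ - d₂ = fun _ => c := by
    intro d₁ d₂ h1 h2
    obtain ⟨c1, hc1⟩ := struct d₁ h1 y hy hopt
    obtain ⟨c1', hc1'⟩ := struct d₁ h1 y' hy' hopt'
    obtain ⟨c2, hc2⟩ := struct d₂ h2 y hy hopt
    obtain ⟨c2', hc2'⟩ := struct d₂ h2 y' hy' hopt'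
    set L1 := lamS (adjA G + Matrix.diagonal d₁) with hL1
    set L2 := lamS (adjA G + Matrix.diagonal d₂) with hL2
    have hdiff : ∀ z : Fin n → ℝ, ∀ i,
        (adjA G + Matrix.diagonal d₁).mulVec z i
          - (adjA G + Matrix.diagonal d₂).mulVec z i
          = (d₁ i - d₂ i) * z i := by
      intro z i
      rw [Matrix.add_mulVec, Matrix.add_mulVec]
      simp only [Pi.add_apply, Matrix.mulVec_diagonal]
      ring
    have hy_rel2 : ∀ i, d₁ i - d₂ i = (L1 - L2) - (c1 - c2) * y i := by
      intro i
      have h := hdiff y i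
      rw [hc1 i, hc2 i] at h
      rcases hy.1 i with hv | hv <;> rw [hv] at h ⊢ <;> ring_nf at h ⊢ <;> linarith
    have hy'_rel2 : ∀ i, d₁ i - d₂ i = (L1 - L2) - (c1' - c2') * y' i := by
      intro i
      have h := hdiff y' i
      rw [hc1' i, hc2' i] at h
      rcases hy'.1 i with hv | hv <;> rw [hv] at h ⊢ <;> ring_nf at h ⊢ <;> linarith
    have hkey : ∀ i, (c1 - c2) * y i = (c1' - c2') * y' i := by
      intro i
      have ha := hy_rel2 i
      have hb := hy'_rel2 i
      linarith
    have ha0 : c1 - c2 = 0 := by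
      by_contra ha
      have ha' : c1' - c2' ≠ 0 := by
        intro h0
        have hk := hkey i0
        rw [h0, zero_mul] at hk
        rcases hy.1 i0 with hv | hv <;> rw [hv] at hk <;>
          exact ha (by linarith)
      have hconst : ∀ i, y' i * y i = y' i0 * y i0 := by
        have haux : ∀ i, c1 - c2 = (c1' - c2') * (y' i * y i) := by
          intro i
          have hk := hkey i
          rcases hy.1 i with hv | hv <;> rcases hy'.1 i with hv' | hv' <;>
            rw [hv, hv'] at hk ⊢ <;> ring_nf at hk ⊢ <;> linarith
        intro i
        have h1 := haux i
        have h2 := haux i0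
        have : (c1' - c2') * (y' i * y i) = (c1' - c2') * (y' i0 * y i0) := by
          linarith
        exact mul_left_cancel₀ ha' this
      have hs : y' i0 * y i0 = 1 ∨ y' i0 * y i0 = -1 := by
        rcases hy.1 i0 with hv | hv <;> rcases hy'.1 i0 with hv' | hv' <;>
          rw [hv, hv'] <;> norm_num
      rcases hs with hs | hs
      · apply hne1
        funext i
        have hci := hconst i
        rw [hs] at hci
        rcases hy.1 i with hv | hv <;> rw [hv] at hci ⊢ <;> linarith
      · apply hne2
        funext i
        have hci := hconst i
        rw [hs] at hci
        simp only [Pi.neg_apply]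
        rcases hy.1 i with hv | hv <;> rw [hv] at hci ⊢ <;> linarith
    refine ⟨L1 - L2, funext fun i => ?_⟩
    have := hy_rel2 i
    rw [ha0] at this
    simp only [Pi.sub_apply]
    linarith
  refine ⟨part1, ?_⟩
  intro z hz hcwz
  obtain ⟨dstar, hdstar⟩ := exists_opt G hn3 hh y hy hopt
  obtain ⟨c, hc⟩ := struct dstar hdstar z hz hcwz
  set L := lamS (adjA G + Matrix.diagonal dstar) with hL
  have hform : ∀ i, dstar i = (dVec G z i + (-c) * z i) + L := by
    intro i
    have h := hc i
    have hmv : (adjA G + Matrix.diagonal dstar).mulVec z i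
        = (adjA G).mulVec z i + dstar i * z i := by
      rw [Matrix.add_mulVec]
      simp only [Pi.add_apply, Matrix.mulVec_diagonal]
    rw [hmv] at h
    have hdv : dVec G z i = -(z i) * (adjA G).mulVec z i := rfl
    rw [hdv]
    rcases hz.1 i with hv | hv <;> rw [hv] at h ⊢ <;> ring_nf at h ⊢ <;> linarith
  have hds : dstar = fun i => (dVec G z i + (-c) * z i) + L := funext hform
  have hex : gB G (fun i => dVec G z i + (-c) * z i) = bw G := by
    rw [← gB_shift G hn2 (fun i => dVec G z i + (-c) * z i) L, ← hds, hdstar]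
  -- z takes both values
  have hplus : ∃ i, z i = 1 := by
    by_contra h
    push_neg at h
    have hall : ∀ i, z i = -1 := fun i => (hz.1 i).resolve_left (h i)
    have : ∑ i, z i = -(n : ℝ) := by
      rw [Finset.sum_congr rfl fun i _ => hall i]
      simp
    rw [hz.2] at this
    have : (n : ℝ) = 0 := by linarith
    have : (0:ℝ) < (n:ℝ) := by exact_mod_cast (by omega : 0 < n)
    linarith
  have hminus : ∃ i, z i = -1 := by
    by_contra h
    push_neg at h
    have hall : ∀ i, z i = 1 := fun i => (hz.1 i).resolve_right (h i)
    have : ∑ i, z i = (n : ℝ) := by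
      rw [Finset.sum_congr rfl fun i _ => hall i]
      simp
    rw [hz.2] at this
    have h2 : (0:ℝ) < (n:ℝ) := by exact_mod_cast (by omega : 0 < n)
    linarith
  refine ⟨-c, hex, ?_⟩
  intro α hα
  obtain ⟨e, he⟩ := part1 (fun i => dVec G z i + α * z i)
    (fun i => dVec G z i + (-c) * z i) hα hex
  obtain ⟨ip, hip⟩ := hplus
  obtain ⟨im, him⟩ := hminus
  have h1 := congrFun he ip
  have h2 := congrFun he im
  simp only [Pi.sub_apply, hip, him] at h1 h2
  -- h1 : (dVec + α*1) - (dVec + (-c)*1) = e, h2 with -1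
  ring_nf at h1 h2
  linarith
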